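/- Let Ω ⊂ ℝ^m be a bounded domain and let X = ∏₁ⁿ C₀(Ω̄), where C₀(Ω̄) = {φ ∈ C(Ω̄,ℝ) : φ = 0 on ∂Ω}, equipped with the sup norm and the pointwise (componentwise) partial order. Then every nonempty compact subset S of X has a least upper bound and a greatest lower bound in X; these are given componentwise by the pointwise supremum and pointwise infimum over S, which are continuous functions on Ω̄ vanishing on ∂Ω. -/

import Mathlib

open Set

/-- **Statement 15.** In `X = ∏₁ⁿ C₀(Ω̄)` (continuous functions on `Ω̄` vanishing on
`∂Ω`, with the sup-norm topology and pointwise componentwise order), every nonempty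
compact subset `S` has a least upper bound and a greatest lower bound in `X`, given
componentwise by the pointwise supremum resp. infimum over `S`. -/
theorem compact_subset_of_C0_has_lub_and_glb
    {m n : ℕ} (Ω : Set (EuclideanSpace ℝ (Fin m)))
    (hopen : IsOpen Ω) (hconn : IsConnected Ω) (hbdd : Bornology.IsBounded Ω)
    (X₀ : Set C(↥(closure Ω), Fin n → ℝ))
    (hX₀ : X₀ = {φ : C(↥(closure Ω), Fin n → ℝ) |
      ∀ x : ↥(closure Ω), (x : EuclideanSpace ℝ (Fin m)) ∈ frontier Ω → φ x = 0})
    (S : Set C(↥(closure Ω), Fin n → ℝ)) (hSX : S ⊆ X₀) (hne : S.Nonempty)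
    (hcomp : IsCompact S) :
    (∃ w ∈ X₀,
      (∀ (x : ↥(closure Ω)) (i : Fin n), w x i = sSup {r : ℝ | ∃ φ ∈ S, φ x i = r}) ∧
      (∀ φ ∈ S, ∀ (x : ↥(closure Ω)) (i : Fin n), φ x i ≤ w x i) ∧
      (∀ w' ∈ X₀, (∀ φ ∈ S, ∀ (x : ↥(closure Ω)) (i : Fin n), φ x i ≤ w' x i) →
        ∀ (x : ↥(closure Ω)) (i : Fin n), w x i ≤ w' x i)) ∧
    (∃ z ∈ X₀,
      (∀ (x : ↥(closure Ω)) (i : Fin n), z x i = sInf {r : ℝ | ∃ φ ∈ S, φ x i = r}) ∧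
      (∀ φ ∈ S, ∀ (x : ↥(closure Ω)) (i : Fin n), z x i ≤ φ x i) ∧
      (∀ z' ∈ X₀, (∀ φ ∈ S, ∀ (x : ↥(closure Ω)) (i : Fin n), z' x i ≤ φ x i) →
        ∀ (x : ↥(closure Ω)) (i : Fin n), z' x i ≤ z x i)) := by
  have hKc : IsCompact (closure Ω) := hbdd.isCompact_closure
  have : CompactSpace ↥(closure Ω) := isCompact_iff_compactSpace.mp hKc
  set K : Type _ := ↥(closure Ω)
  -- evaluation map is continuous in both arguments
  have heval : ∀ i : Fin n,
      Continuous (fun p : K × C(K, Fin n → ℝ) => p.2 p.1 i) := by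
    intro i
    have h1 : Continuous (fun p : K × C(K, Fin n → ℝ) => p.2 p.1) :=
      continuous_eval.comp continuous_swap
    exact (continuous_apply i).comp h1
  -- the value sets
  have hset : ∀ (x : K) (i : Fin n),
      {r : ℝ | ∃ φ ∈ S, φ x i = r} = (fun φ : C(K, Fin n → ℝ) => φ x i) '' S := by
    intro x i; ext r; simp [eq_comm]; exact Iff.rfl
  have hsetne : ∀ (x : K) (i : Fin n), {r : ℝ | ∃ φ ∈ S, φ x i = r}.Nonempty := by
    intro x i; obtain ⟨φ, hφ⟩ := hne; exact ⟨φ x i, φ, hφ, rfl⟩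
  have hcont : ∀ (x : K) (i : Fin n), Continuous (fun φ : C(K, Fin n → ℝ) => φ x i) := by
    intro x i
    exact (heval i).comp (continuous_const.prodMk continuous_id)
  have hbddA : ∀ (x : K) (i : Fin n), BddAbove {r : ℝ | ∃ φ ∈ S, φ x i = r} := by
    intro x i; rw [hset]
    exact (hcomp.image (hcont x i)).bddAbove
  have hbddB : ∀ (x : K) (i : Fin n), BddBelow {r : ℝ | ∃ φ ∈ S, φ x i = r} := by
    intro x i; rw [hset]
    exact (hcomp.image (hcont x i)).bddBelow
  -- continuity of sup / inf
  have hcs : ∀ i : Fin n, Continuous (fun x : K => sSup {r : ℝ | ∃ φ ∈ S, φ x i = r}) := by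
    intro i
    have := hcomp.continuous_sSup
      (f := fun (x : K) (φ : C(K, Fin n → ℝ)) => φ x i) (heval i)
    refine this.congr fun x => ?_
    rw [hset]
  have hci : ∀ i : Fin n, Continuous (fun x : K => sInf {r : ℝ | ∃ φ ∈ S, φ x i = r}) := by
    intro i
    have := hcomp.continuous_sInf
      (f := fun (x : K) (φ : C(K, Fin n → ℝ)) => φ x i) (heval i)
    refine this.congr fun x => ?_
    rw [hset]
  -- boundary behaviour: on the frontier all value sets are {0}
  have hfr : ∀ (x : K), (x : EuclideanSpace ℝ (Fin m)) ∈ frontier Ω →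
      ∀ i : Fin n, {r : ℝ | ∃ φ ∈ S, φ x i = r} = {0} := by
    intro x hx i
    ext r
    constructor
    · rintro ⟨φ, hφ, rfl⟩
      have := hSX hφ
      rw [hX₀] at this
      have h0 := this x hx
      simp [congrFun h0 i]
    · rintro rfl
      obtain ⟨φ, hφ⟩ := hne
      refine ⟨φ, hφ, ?_⟩
      have := hSX hφ
      rw [hX₀] at this
      exact congrFun (this x hx) i
  constructor
  · refine ⟨⟨fun x i => sSup {r : ℝ | ∃ φ ∈ S, φ x i = r}, ?_⟩, ?_, fun x i => rfl, ?_, ?_⟩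
    · exact continuous_pi fun i => hcs i
    · rw [hX₀]
      intro x hx
      funext i
      simp only [ContinuousMap.coe_mk]
      rw [hfr x hx i, csSup_singleton]; rfl
    · intro φ hφ x i
      exact le_csSup (hbddA x i) ⟨φ, hφ, rfl⟩
    · intro w' hw' hub x i
      exact csSup_le (hsetne x i) (by rintro r ⟨φ, hφ, rfl⟩; exact hub φ hφ x i)
  · refine ⟨⟨fun x i => sInf {r : ℝ | ∃ φ ∈ S, φ x i = r}, ?_⟩, ?_, fun x i => rfl, ?_, ?_⟩
    · exact continuous_pi fun i => hci i
    · rw [hX₀]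
      intro x hx
      funext i
      simp only [ContinuousMap.coe_mk]
      rw [hfr x hx i, csInf_singleton]; rfl
    · intro φ hφ x i
      exact csInf_le (hbddB x i) ⟨φ, hφ, rfl⟩
    · intro z' hz' hlb x i
      exact le_csInf (hsetne x i) (by rintro r ⟨φ, hφ, rfl⟩; exact hlb φ hφ x i)
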